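/- Let F be a field, fix an admissible order ≺ on the monomials of F[x₁,…,xₙ], let 𝒫 be a set of polynomials and let S be a 𝒫-support. Then for all monomials m and m′ such that m′ appears with nonzero coefficient in the reduction R_{⟨S(m)⟩}(m) of m modulo the ideal generated by S(m), it holds that S(m′) ⊆ S(m) and, for every variable x, S(x·m′) ⊆ S(x·m). -/

import Mathlib

/-- An admissible order on the monomials (exponent vectors) of a polynomial ring:
a total well-order in which `1` (the zero exponent vector) is smallest and which
respects multiplication (addition of exponent vectors). -/
structure AdmissibleOrder (σ : Type*) where
  lt : (σ →₀ ℕ) → (σ →₀ ℕ) → Prop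
  trans : ∀ {a b c}, lt a b → lt b c → lt a c
  irrefl : ∀ a, ¬ lt a a
  total : ∀ a b, a = b ∨ lt a b ∨ lt b a
  wf : WellFounded lt
  zero_lt : ∀ m, m ≠ 0 → lt 0 m
  add_lt : ∀ (m : σ →₀ ℕ) {m₁ m₂}, lt m₁ m₂ → lt (m + m₁) (m + m₂)

/-- `μ` is the leading monomial of `p`. -/
def IsLeadingMonomial {σ F : Type*} [CommSemiring F] (O : AdmissibleOrder σ)
    (p : MvPolynomial σ F) (μ : σ →₀ ℕ) : Prop :=
  μ ∈ p.support ∧ ∀ ν ∈ p.support, ν ≠ μ → O.lt ν μ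

/-- A monomial `μ` is reducible modulo an ideal `I` if it is the leading monomial of
some polynomial of `I`. -/
def Reducible {σ F : Type*} [CommSemiring F] (O : AdmissibleOrder σ)
    (I : Ideal (MvPolynomial σ F)) (μ : σ →₀ ℕ) : Prop :=
  ∃ p ∈ I, IsLeadingMonomial O p μ

/-- The total degree of a monomial (exponent vector). -/
def monDeg {σ : Type*} (m : σ →₀ ℕ) : ℕ := m.sum fun _ e => e

/-- A `P`-support: a map `S` from sets of variables to subsets of `P`; `S` is applied
to a monomial `m` via its set of variables `m.support`. -/
structure IsSupport {σ F : Type*} [CommSemiring F] [DecidableEq σ]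
    (O : AdmissibleOrder σ) (P : Set (MvPolynomial σ F))
    (S : Finset σ → Set (MvPolynomial σ F)) : Prop where
  subset_ambient : ∀ Y, S Y ⊆ P
  prop1 : ∀ (x : σ) (m m' : σ →₀ ℕ), O.lt m' m → S m'.support ⊆ S m.support →
    S (m' + Finsupp.single x 1).support ⊆ S (m + Finsupp.single x 1).support
  prop2 : ∀ (m m' : σ →₀ ℕ), O.lt m' m →
    ((m'.support : Set σ) ⊆ ⋃ p ∈ S m.support, (p.vars : Set σ)) →
    S m'.support ⊆ S m.support
  prop3 : ∀ p ∈ P, ∀ μ : σ →₀ ℕ, IsLeadingMonomial O p μ → p ∈ S μ.support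


/-- `r` is the reduction of `P` modulo `I`: `P - r ∈ I` and every monomial of `r`
is irreducible modulo `I`. -/
def IsReduction {σ F : Type*} [CommRing F] (O : AdmissibleOrder σ)
    (I : Ideal (MvPolynomial σ F)) (P r : MvPolynomial σ F) : Prop :=
  P - r ∈ I ∧ ∀ μ ∈ r.support, ¬ Reducible O I μ

/-! ### Auxiliary lemmas -/

section Aux

/-- Every nonempty finite set of monomials has a `≺`-largest element. -/
lemma aux_finset_max {σ : Type*} (O : AdmissibleOrder σ) (s : Finset (σ →₀ ℕ))
    (hs : s.Nonempty) : ∃ ν ∈ s, ∀ μ ∈ s, μ ≠ ν → O.lt μ ν := by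
  classical
  induction s using Finset.induction_on with
  | empty => exact absurd hs (by simp)
  | @insert a s ha ih =>
    rcases s.eq_empty_or_nonempty with h | h
    · subst h
      exact ⟨a, by simp, by simp⟩
    · obtain ⟨ν, hν, hmax⟩ := ih h
      rcases O.total a ν with h1 | h1 | h1
      · exact absurd (h1 ▸ hν) ha
      · refine ⟨ν, Finset.mem_insert_of_mem hν, ?_⟩
        intro μ hμ hne
        rcases Finset.mem_insert.mp hμ with rfl | hμ
        · exact h1
        · exact hmax μ hμ hne
      · refine ⟨a, Finset.mem_insert_self a s, ?_⟩
        intro μ hμ hne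
        rcases Finset.mem_insert.mp hμ with rfl | hμ
        · exact absurd rfl hne
        · rcases eq_or_ne μ ν with rfl | h2
          · exact h1
          · exact O.trans (hmax μ hμ h2) h1

/-- Every nonzero polynomial has a leading monomial. -/
lemma aux_exists_LM {σ F : Type*} [CommSemiring F] (O : AdmissibleOrder σ)
    {p : MvPolynomial σ F} (hp : p ≠ 0) : ∃ ν, IsLeadingMonomial O p ν := by
  obtain ⟨ν, hν, hmax⟩ := aux_finset_max O p.support
    (by rwa [Finset.nonempty_iff_ne_empty, ne_eq, MvPolynomial.support_eq_empty])
  exact ⟨ν, hν, hmax⟩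

lemma aux_supp_add {σ : Type*} [DecidableEq σ] (a b : σ →₀ ℕ) :
    (a + b).support = a.support ∪ b.support := by
  ext i
  simp only [Finsupp.mem_support_iff, Finsupp.add_apply, Finset.mem_union]
  omega

variable {σ F : Type*} [CommRing F] [DecidableEq σ]

/-- Filtering the monomials of a polynomial by a predicate on exponent vectors. -/
def pfilter (p : (σ →₀ ℕ) → Prop) [DecidablePred p] (q : MvPolynomial σ F) :
    MvPolynomial σ F := AddMonoidAlgebra.ofCoeff (Finsupp.filter p (AddMonoidAlgebra.coeff q))

omit [DecidableEq σ] in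
lemma aux_coeff_filter (p : (σ →₀ ℕ) → Prop) [DecidablePred p] (q : MvPolynomial σ F)
    (ν : σ →₀ ℕ) :
    MvPolynomial.coeff ν (pfilter p q) = if p ν then MvPolynomial.coeff ν q else 0 :=
  rfl

omit [DecidableEq σ] in
lemma aux_filter_add (p : (σ →₀ ℕ) → Prop) [DecidablePred p] (a b : MvPolynomial σ F) :
    pfilter p (a + b) = pfilter p a + pfilter p b := by
  apply MvPolynomial.ext
  intro ν
  simp only [aux_coeff_filter, MvPolynomial.coeff_add]
  split_ifs <;> simp

omit [DecidableEq σ] in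
lemma aux_filter_sub (p : (σ →₀ ℕ) → Prop) [DecidablePred p] (a b : MvPolynomial σ F) :
    pfilter p (a - b) = pfilter p a - pfilter p b := by
  apply MvPolynomial.ext
  intro ν
  simp only [aux_coeff_filter, MvPolynomial.coeff_sub]
  split_ifs <;> simp

omit [DecidableEq σ] in
lemma aux_filter_support (p : (σ →₀ ℕ) → Prop) [DecidablePred p] (a : MvPolynomial σ F) :
    (pfilter p a).support ⊆ a.support := by
  intro ν hν
  rw [MvPolynomial.mem_support_iff, aux_coeff_filter] at hν
  rw [MvPolynomial.mem_support_iff]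
  by_cases h : p ν
  · rwa [if_pos h] at hν
  · rw [if_neg h] at hν; exact absurd rfl hν

omit [DecidableEq σ] in
lemma aux_filter_zero (p : (σ →₀ ℕ) → Prop) [DecidablePred p] :
    pfilter p (0 : MvPolynomial σ F) = 0 := by
  apply MvPolynomial.ext; intro ν
  simp [aux_coeff_filter]

omit [DecidableEq σ] in
lemma aux_filter_sum (p : (σ →₀ ℕ) → Prop) [DecidablePred p] {ι : Type*} (s : Finset ι)
    (f : ι → MvPolynomial σ F) :
    pfilter p (∑ i ∈ s, f i) = ∑ i ∈ s, pfilter p (f i) := by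
  classical
  induction s using Finset.induction_on with
  | empty => simp [aux_filter_zero]
  | @insert a s ha ih =>
      rw [Finset.sum_insert ha, Finset.sum_insert ha, aux_filter_add, ih]

/-- The restriction of an exponent vector to the variables outside `V`. -/
def outV (V : Finset σ) (w : σ →₀ ℕ) : σ →₀ ℕ := Finsupp.filter (fun i => ¬ i ∈ V) w

lemma outV_add (V : Finset σ) (a b : σ →₀ ℕ) : outV V (a + b) = outV V a + outV V b :=
  Finsupp.filter_add

lemma outV_eq_zero (V : Finset σ) {w : σ →₀ ℕ} (h : ∀ i ∈ w.support, i ∈ V) :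
    outV V w = 0 := by
  ext i
  rw [outV, Finsupp.filter_apply]
  by_cases hi : ¬ i ∈ V
  · rw [if_pos hi]
    by_contra hne
    exact hi (h i (Finsupp.mem_support_iff.mpr (by simpa using hne)))
  · rw [if_neg hi]; rfl

lemma aux_filter_mul_right (V : Finset σ) (τ : σ →₀ ℕ) (a g : MvPolynomial σ F)
    (hg : ∀ ν ∈ g.support, ∀ i ∈ ν.support, i ∈ V) :
    pfilter (fun ν => outV V ν = τ) (a * g) =
      (pfilter (fun ν => outV V ν = τ) a) * g := by
  apply MvPolynomial.ext
  intro ν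
  rw [aux_coeff_filter, MvPolynomial.coeff_mul, MvPolynomial.coeff_mul]
  have key : ∀ x ∈ Finset.HasAntidiagonal.antidiagonal ν, MvPolynomial.coeff x.2 g ≠ 0 →
      outV V x.1 = outV V ν := by
    intro x hx hyg
    have hsum : x.1 + x.2 = ν := Finset.HasAntidiagonal.mem_antidiagonal.mp hx
    have h2 : outV V x.1 + outV V x.2 = outV V ν := by rw [← outV_add, hsum]
    rwa [outV_eq_zero V (hg _ (MvPolynomial.mem_support_iff.mpr hyg)), add_zero] at h2
  by_cases hν : outV V ν = τ
  · rw [if_pos hν]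
    refine Finset.sum_congr rfl fun x hx => ?_
    rw [aux_coeff_filter]
    by_cases hyg : MvPolynomial.coeff x.2 g = 0
    · simp [hyg]
    · rw [if_pos (by rw [key x hx hyg]; exact hν)]
  · rw [if_neg hν]
    symm
    refine Finset.sum_eq_zero fun x hx => ?_
    rw [aux_coeff_filter]
    by_cases hyg : MvPolynomial.coeff x.2 g = 0
    · simp [hyg]
    · rw [if_neg (fun h => hν ((key x hx hyg) ▸ h)), zero_mul]

/-- The `τ`-slice (w.r.t. the variables outside `V`) of an element of an ideal generated
by polynomials using only variables of `V` again lies in the ideal. -/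
lemma aux_slice_mem_span (V : Finset σ) (τ : σ →₀ ℕ) (G : Set (MvPolynomial σ F))
    (hG : ∀ g ∈ G, ∀ ν ∈ g.support, ∀ i ∈ ν.support, i ∈ V)
    {q : MvPolynomial σ F} (hq : q ∈ Ideal.span G) :
    pfilter (fun ν => outV V ν = τ) q ∈ Ideal.span G := by
  obtain ⟨c, hcsupp, hcsum⟩ := Submodule.mem_span_set.mp hq
  rw [← hcsum, Finsupp.sum, aux_filter_sum]
  refine Submodule.sum_mem _ fun g hg => ?_
  have hgG : g ∈ G := hcsupp hg
  rw [smul_eq_mul, aux_filter_mul_right V τ _ g (hG g hgG)]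
  exact Ideal.mul_mem_left _ _ (Ideal.subset_span hgG)

omit [DecidableEq σ] in
/-- Every monomial of a reduction of `m` other than `m` itself is `≺ m`. -/
lemma aux_reduction_lt (O : AdmissibleOrder σ)
    (I : Ideal (MvPolynomial σ F)) (m : σ →₀ ℕ) (r : MvPolynomial σ F)
    (hr : IsReduction O I (MvPolynomial.monomial m 1) r)
    {m' : σ →₀ ℕ} (hm' : m' ∈ r.support) (hne : m' ≠ m) : O.lt m' m := by
  classical
  set p : MvPolynomial σ F := MvPolynomial.monomial m 1 - r with hp
  have hmem : m' ∈ p.support := by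
    rw [MvPolynomial.mem_support_iff, hp, MvPolynomial.coeff_sub, MvPolynomial.coeff_monomial,
      if_neg (fun h => hne h.symm), zero_sub, neg_ne_zero]
    exact MvPolynomial.mem_support_iff.mp hm'
  have hpne : p ≠ 0 := fun h => by rw [h] at hmem; simp at hmem
  obtain ⟨ν, hLM⟩ := aux_exists_LM O hpne
  have hred : Reducible O I ν := ⟨p, hr.1, hLM⟩
  have hνr : ν ∉ r.support := fun h => hr.2 ν h hred
  have hνm : ν = m := by
    have h1 := hLM.1
    rw [MvPolynomial.mem_support_iff, hp, MvPolynomial.coeff_sub] at h1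
    by_contra h
    rw [MvPolynomial.coeff_monomial, if_neg (fun e => h e.symm), zero_sub, neg_ne_zero] at h1
    exact hνr (MvPolynomial.mem_support_iff.mpr h1)
  exact hνm ▸ hLM.2 m' hmem (fun e => hne (e.trans hνm))

/-- Every monomial of a reduction of `m` modulo an ideal generated by polynomials with
variables inside `V` agrees with `m` outside `V`. -/
lemma aux_reduction_outside (O : AdmissibleOrder σ) (V : Finset σ)
    (G : Set (MvPolynomial σ F))
    (hG : ∀ g ∈ G, ∀ ν ∈ g.support, ∀ i ∈ ν.support, i ∈ V)
    (m : σ →₀ ℕ) (r : MvPolynomial σ F)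
    (hr : IsReduction O (Ideal.span G) (MvPolynomial.monomial m 1) r)
    {m' : σ →₀ ℕ} (hm' : m' ∈ r.support) : outV V m' = outV V m := by
  by_contra hne
  set τ := outV V m' with hτ
  have hq : pfilter (fun ν => outV V ν = τ)
      ((MvPolynomial.monomial m 1 : MvPolynomial σ F) - r) ∈ Ideal.span G :=
    aux_slice_mem_span V τ G hG hr.1
  have hmono : pfilter (fun ν => outV V ν = τ)
      ((MvPolynomial.monomial m (1 : F)) : MvPolynomial σ F) = 0 := by
    apply MvPolynomial.ext; intro ν
    rw [aux_coeff_filter, MvPolynomial.coeff_monomial, MvPolynomial.coeff_zero]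
    split_ifs with h1 h2
    · rw [← h2] at h1
      exact absurd h1.symm hne
    · rfl
    · rfl
  have hfq : pfilter (fun ν => outV V ν = τ)
      ((MvPolynomial.monomial m 1 : MvPolynomial σ F) - r)
      = - pfilter (fun ν => outV V ν = τ) r := by
    rw [aux_filter_sub, hmono, zero_sub]
  have hne0 : pfilter (fun ν => outV V ν = τ) r ≠ 0 := by
    intro h
    have h2 : MvPolynomial.coeff m' (pfilter (fun ν => outV V ν = τ) r) = 0 := by
      rw [h]; simp
    rw [aux_coeff_filter, if_pos rfl] at h2
    exact MvPolynomial.mem_support_iff.mp hm' h2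
  obtain ⟨ν, hLM⟩ := aux_exists_LM O (p := (MvPolynomial.monomial m 1 : MvPolynomial σ F) - r
      |> pfilter (fun ν => outV V ν = τ)) (by rw [hfq]; exact neg_ne_zero.mpr hne0)
  have hred : Reducible O (Ideal.span G) ν := ⟨_, hq, hLM⟩
  have hν : ν ∈ r.support := by
    have h1 := hLM.1
    rw [hfq, MvPolynomial.support_neg] at h1
    exact aux_filter_support _ r h1
  exact hr.2 ν hν hred

/-- Repeatedly applying `prop1` of a support. -/
lemma aux_chain {F' : Type*} [CommSemiring F'] {O : AdmissibleOrder σ}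
    {P : Set (MvPolynomial σ F')} {S : Finset σ → Set (MvPolynomial σ F')}
    (hS : IsSupport O P S) :
    ∀ (k : ℕ) (c a b : σ →₀ ℕ), monDeg c = k → O.lt a b → S a.support ⊆ S b.support →
      S (a + c).support ⊆ S (b + c).support := by
  intro k
  induction k with
  | zero =>
      intro c a b hdeg hlt hsub
      have hc0 : c = 0 := by
        ext i
        rw [monDeg, Finsupp.sum] at hdeg
        by_contra h
        have hi : i ∈ c.support := Finsupp.mem_support_iff.mpr (by simpa using h)
        exact absurd (Finset.sum_eq_zero_iff.mp hdeg i hi)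
          (Finsupp.mem_support_iff.mp hi)
      subst hc0
      simpa using hsub
  | succ k ih =>
      intro c a b hdeg hlt hsub
      have hc : c ≠ 0 := by rintro rfl; simp [monDeg] at hdeg
      obtain ⟨x, hx⟩ := Finsupp.support_nonempty_iff.mpr hc
      have hcx : c x ≠ 0 := Finsupp.mem_support_iff.mp hx
      set c' := c - Finsupp.single x 1 with hc'
      have hsplit : c = c' + Finsupp.single x 1 := by
        ext i
        rw [Finsupp.add_apply, hc', Finsupp.tsub_apply]
        rcases eq_or_ne i x with rfl | hix
        · simp only [Finsupp.single_eq_same]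
          omega
        · simp [Finsupp.single_eq_of_ne' (Ne.symm hix)]
      have hdeg' : monDeg c' = k := by
        have h2 : monDeg c = monDeg c' + 1 := by
          rw [hsplit, monDeg, Finsupp.sum_add_index' (fun _ => rfl) (fun _ _ _ => rfl)]
          congr 1
          exact Finsupp.sum_single_index rfl
        omega
      have h1 := ih c' a b hdeg' hlt hsub
      have hlt' : O.lt (a + c') (b + c') := by
        have h := O.add_lt c' hlt
        rwa [add_comm c' a, add_comm c' b] at h
      have h2 := hS.prop1 x (b + c') (a + c') hlt' h1
      rw [hsplit, ← add_assoc, ← add_assoc]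
      exact h2

end Aux

/-- if `m'` appears with nonzero coefficient in the reduction of `m`
modulo the ideal generated by `S(m)`, then `S(m') ⊆ S(m)` and, for every variable `x`,
`S(x·m') ⊆ S(x·m)`. -/
theorem stmt_11 {F : Type*} [Field F] {n : ℕ} (O : AdmissibleOrder (Fin n))
    (P : Set (MvPolynomial (Fin n) F))
    (S : Finset (Fin n) → Set (MvPolynomial (Fin n) F)) (hS : IsSupport O P S)
    (m m' : Fin n →₀ ℕ) (r : MvPolynomial (Fin n) F)
    (hr : IsReduction O (Ideal.span (S m.support)) (MvPolynomial.monomial m 1) r)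
    (hm' : m' ∈ r.support) :
    S m'.support ⊆ S m.support ∧
      ∀ x : Fin n, S (m' + Finsupp.single x 1).support ⊆
        S (m + Finsupp.single x 1).support := by
  classical
  by_cases hmm : m' = m
  · subst hmm
    exact ⟨subset_rfl, fun x => subset_rfl⟩
  have hlt : O.lt m' m := aux_reduction_lt O _ m r hr hm' hmm
  set Vs : Set (Fin n) := ⋃ p ∈ S m.support, (p.vars : Set (Fin n)) with hVs
  set V : Finset (Fin n) := (Set.toFinite Vs).toFinset with hV
  have hVmem : ∀ i, i ∈ V ↔ i ∈ Vs := fun i => (Set.toFinite Vs).mem_toFinset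
  have hG : ∀ g ∈ S m.support, ∀ ν ∈ g.support, ∀ i ∈ ν.support, i ∈ V := by
    intro g hg ν hν i hi
    rw [hVmem]
    exact Set.mem_biUnion hg
      (by simp only [Finset.mem_coe, MvPolynomial.mem_vars]; exact ⟨ν, hν, hi⟩)
  have hout : outV V m' = outV V m := aux_reduction_outside O V _ hG m r hr hm'
  set μ : Fin n →₀ ℕ := Finsupp.filter (fun i => i ∈ V) m' with hμ
  set t₂ : Fin n →₀ ℕ := outV V m with ht₂
  have hm'eq : m' = μ + t₂ := by
    rw [← hout]
    exact (Finsupp.filter_pos_add_filter_neg m' (fun i => i ∈ V)).symm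
  have ht₂m : t₂.support ⊆ m.support := by
    intro i hi
    have := Finsupp.support_filter (p := fun i => ¬ i ∈ V) (f := m) ▸ hi
    exact Finset.mem_of_mem_filter i this
  have hμvars : (μ.support : Set (Fin n)) ⊆ ⋃ p ∈ S m.support, (p.vars : Set (Fin n)) := by
    intro i hi
    have hi' : i ∈ μ.support := hi
    rw [hμ, Finsupp.support_filter, Finset.mem_filter] at hi'
    exact (hVmem i).mp hi'.2
  have hμlt : O.lt μ m := by
    by_cases ht : t₂ = 0
    · rw [ht, add_zero] at hm'eq
      exact hm'eq ▸ hlt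
    · have h1 : O.lt μ m' := by
        have h := O.add_lt μ (O.zero_lt t₂ ht)
        rw [add_zero] at h
        exact hm'eq ▸ h
      exact O.trans h1 hlt
  have hbase : S μ.support ⊆ S m.support := hS.prop2 m μ hμlt hμvars
  have hchain : S (μ + t₂).support ⊆ S (m + t₂).support :=
    aux_chain hS (monDeg t₂) t₂ μ m rfl hμlt hbase
  rw [← hm'eq] at hchain
  have hsupp : (m + t₂).support = m.support := by
    rw [aux_supp_add, Finset.union_eq_left.mpr ht₂m]
  have part1 : S m'.support ⊆ S m.support := by rwa [hsupp] at hchain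
  refine ⟨part1, fun x => ?_⟩
  have hlt2 : O.lt m' (m + t₂) := by
    have h := O.add_lt t₂ hμlt
    rwa [add_comm t₂ μ, ← hm'eq, add_comm t₂ m] at h
  have h3 := hS.prop1 x (m + t₂) m' hlt2 hchain
  have hsupp2 : (m + t₂ + Finsupp.single x 1).support = (m + Finsupp.single x 1).support := by
    rw [aux_supp_add (m + t₂), aux_supp_add m t₂, aux_supp_add m,
      Finset.union_eq_left.mpr ht₂m]
  rwa [hsupp2] at h3
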